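/- arXiv:2408.03890 — 4 statements merged into one kernel-verified Lean document; each statement's English description precedes it below -/
import Mathlib

section
/- The intrinsic volumes of hyperbolic balls satisfy V_j(B_r) = ω_d cosh^{d-1-j}(r) sinh^j(r) for j ∈ {0,…,d-1}. Equivalently: if ω_d ∫_0^{r+s} sinh^{d-1}(t) dt = v_d(r) + Σ_{j=0}^{d-1} l_{d,j}(s) v_j(r) holds for all r,s ≥ 0, where v_d(r) = ω_d ∫_0^r sinh^{d-1}(t) dt, then v_j(r) = ω_d cosh^{d-1-j}(r) sinh^j(r) for each j ∈ {0,…,d-1}. -/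
open Real


lemma key_integral (n : ℕ) (r s : ℝ) :
    (∫ t in (0:ℝ)..(r + s), Real.sinh t ^ n)
      = (∫ t in (0:ℝ)..r, Real.sinh t ^ n)
        + ∑ j ∈ Finset.range (n+1),
            ((n.choose j : ℝ) * ∫ t in (0:ℝ)..s, Real.cosh t ^ j * Real.sinh t ^ (n - j))
              * (Real.cosh r ^ (n - j) * Real.sinh r ^ j) := by
  have cont : Continuous fun t : ℝ => Real.sinh t ^ n := by fun_prop
  have h1 : (∫ t in (0:ℝ)..r, Real.sinh t ^ n) + (∫ t in r..(r+s), Real.sinh t ^ n)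
      = ∫ t in (0:ℝ)..(r + s), Real.sinh t ^ n :=
    intervalIntegral.integral_add_adjacent_intervals (cont.intervalIntegrable _ _)
      (cont.intervalIntegrable _ _)
  rw [← h1]
  congr 1
  have h2 : (∫ t in (0:ℝ)..s, Real.sinh (r + t) ^ n) = ∫ t in r..(r+s), Real.sinh t ^ n := by
    rw [intervalIntegral.integral_comp_add_left (fun t => Real.sinh t ^ n) r]; norm_num
  rw [← h2]
  have h3 : ∀ t : ℝ, Real.sinh (r + t) ^ n
      = ∑ j ∈ Finset.range (n+1),
          ((n.choose j : ℝ) * (Real.cosh r ^ (n - j) * Real.sinh r ^ j))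
            * (Real.cosh t ^ j * Real.sinh t ^ (n - j)) := by
    intro t
    rw [Real.sinh_add, add_pow]
    refine Finset.sum_congr rfl fun j hj => ?_
    ring
  simp_rw [h3]
  rw [intervalIntegral.integral_finset_sum]
  · refine Finset.sum_congr rfl fun j hj => ?_
    rw [intervalIntegral.integral_const_mul]
    ring
  · intro j hj
    apply Continuous.intervalIntegrable
    fun_prop


lemma tanh_inj : Function.Injective Real.tanh := by
  intro a b hab
  have ha := Real.cosh_pos a
  have hb := Real.cosh_pos b
  rw [Real.tanh_eq_sinh_div_cosh, Real.tanh_eq_sinh_div_cosh, div_eq_div_iff ha.ne' hb.ne'] at hab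
  have : Real.sinh (a - b) = 0 := by rw [Real.sinh_sub]; linarith
  have := Real.sinh_injective (by simpa using this : Real.sinh (a-b) = Real.sinh 0)
  linarith

lemma lin_indep (d : ℕ) (hd : 1 ≤ d) (c : Fin d → ℝ)
    (hc : ∀ s : ℝ, 0 ≤ s →
      ∑ j : Fin d, (((d-1).choose (j:ℕ) : ℝ) *
        ∫ t in (0:ℝ)..s, Real.cosh t ^ (j:ℕ) * Real.sinh t ^ (d - 1 - (j:ℕ))) * c j = 0) :
    ∀ j, c j = 0 := by
  set F : ℝ → ℝ := fun s => ∑ j : Fin d, (((d-1).choose (j:ℕ) : ℝ) *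
        ∫ t in (0:ℝ)..s, Real.cosh t ^ (j:ℕ) * Real.sinh t ^ (d - 1 - (j:ℕ))) * c j with hF
  -- derivative of F
  have hder : ∀ s : ℝ, HasDerivAt F
      (∑ j : Fin d, (((d-1).choose (j:ℕ) : ℝ) *
        (Real.cosh s ^ (j:ℕ) * Real.sinh s ^ (d - 1 - (j:ℕ)))) * c j) s := by
    intro s
    apply HasDerivAt.fun_sum
    intro j _
    have hcont : Continuous fun t : ℝ => Real.cosh t ^ (j:ℕ) * Real.sinh t ^ (d - 1 - (j:ℕ)) := by
      fun_prop
    have h1 : HasDerivAt (fun u : ℝ => ∫ t in (0:ℝ)..u,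
        Real.cosh t ^ (j:ℕ) * Real.sinh t ^ (d - 1 - (j:ℕ)))
        (Real.cosh s ^ (j:ℕ) * Real.sinh s ^ (d - 1 - (j:ℕ))) s :=
      intervalIntegral.integral_hasDerivAt_right (hcont.intervalIntegrable _ _)
        (hcont.stronglyMeasurableAtFilter _ _) hcont.continuousAt
    simpa [mul_assoc] using (h1.const_mul (((d-1).choose (j:ℕ) : ℝ))).mul_const (c j)
  -- F vanishes near any s > 0, so its derivative vanishes there
  have hderiv0 : ∀ s : ℝ, 0 < s →
      ∑ j : Fin d, (((d-1).choose (j:ℕ) : ℝ) *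
        (Real.cosh s ^ (j:ℕ) * Real.sinh s ^ (d - 1 - (j:ℕ)))) * c j = 0 := by
    intro s hs
    have hev : F =ᶠ[nhds s] (fun _ => (0:ℝ)) := by
      filter_upwards [Ioi_mem_nhds hs] with x hx
      exact hc x (le_of_lt hx)
    have := hev.deriv_eq
    rw [(hder s).deriv] at this
    simpa using this
  -- polynomial argument
  set P : Polynomial ℝ := ∑ j : Fin d, Polynomial.C (((d-1).choose (j:ℕ) : ℝ) * c j) *
    Polynomial.X ^ (d - 1 - (j:ℕ)) with hP
  have hroot : ∀ s : ℝ, 0 < s → P.IsRoot (Real.tanh s) := by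
    intro s hs
    have hcosh := Real.cosh_pos s
    have key : P.eval (Real.tanh s) * Real.cosh s ^ (d-1) = 0 := by
      rw [hP]
      simp only [Polynomial.eval_finset_sum, Polynomial.eval_mul, Polynomial.eval_C,
        Polynomial.eval_pow, Polynomial.eval_X, Finset.sum_mul]
      rw [← hderiv0 s hs]
      refine Finset.sum_congr rfl fun j _ => ?_
      have hj : (j:ℕ) ≤ d - 1 := by omega
      have : Real.tanh s ^ (d - 1 - (j:ℕ)) * Real.cosh s ^ (d-1)
          = Real.cosh s ^ (j:ℕ) * Real.sinh s ^ (d - 1 - (j:ℕ)) := by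
        have hsplit : Real.cosh s ^ (d-1)
            = Real.cosh s ^ (d - 1 - (j:ℕ)) * Real.cosh s ^ (j:ℕ) := by
          rw [← pow_add]; congr 1; omega
        have hne : Real.cosh s ^ (d - 1 - (j:ℕ)) ≠ 0 := by positivity
        rw [Real.tanh_eq_sinh_div_cosh, div_pow, hsplit]
        field_simp
      rw [mul_assoc, this]
      ring
    have := mul_eq_zero.1 key
    rcases this with h | h
    · exact h
    · exact absurd h (by positivity)
  have hP0 : P = 0 := by
    apply Polynomial.eq_zero_of_infinite_isRoot
    refine ((Set.Ioi_infinite (0:ℝ)).image tanh_inj.injOn).mono ?_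
    rintro x ⟨s, hs, rfl⟩
    exact hroot s hs
  intro j0
  have hcoeff : P.coeff (d - 1 - (j0:ℕ)) = ((d-1).choose (j0:ℕ) : ℝ) * c j0 := by
    rw [hP, Polynomial.finset_sum_coeff]
    rw [Finset.sum_eq_single j0]
    · rw [Polynomial.coeff_C_mul, Polynomial.coeff_X_pow]; simp
    · intro j _ hne
      simp only [Polynomial.coeff_C_mul, Polynomial.coeff_X_pow]
      have : ¬ (d - 1 - (j0:ℕ) = d - 1 - (j:ℕ)) := by
        have h1 := j.isLt
        have h2 := j0.isLt
        intro heq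
        apply hne
        apply Fin.ext
        omega
      simp [this]
    · simp
  rw [hP0] at hcoeff
  simp only [Polynomial.coeff_zero] at hcoeff
  have hch : (0:ℝ) < ((d-1).choose (j0:ℕ) : ℝ) := by
    have : (j0:ℕ) ≤ d - 1 := by omega
    exact_mod_cast Nat.choose_pos this
  rcases mul_eq_zero.1 hcoeff.symm with h | h
  · exact absurd h hch.ne'
  · exact h

/-- If functions `v_0,…,v_{d-1}` satisfy the hyperbolic Steiner formula for balls,
`ω ∫_0^{r+s} sinh^{d-1} = ω ∫_0^r sinh^{d-1} + Σ_j l_{d,j}(s) v_j(r)` for all `r,s ≥ 0`,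
then `v_j(r) = ω cosh^{d-1-j}(r) sinh^j(r)` for all `j ∈ {0,…,d-1}` and `r ≥ 0`. -/
theorem intrinsic_volumes_of_balls (d : ℕ) (hd : 2 ≤ d) (ω : ℝ) (hω : 0 < ω)
    (v : Fin d → ℝ → ℝ)
    (h : ∀ r s : ℝ, 0 ≤ r → 0 ≤ s →
      ω * ∫ t in (0:ℝ)..(r + s), Real.sinh t ^ (d - 1)
        = ω * (∫ t in (0:ℝ)..r, Real.sinh t ^ (d - 1))
          + ∑ j : Fin d, ((Nat.choose (d - 1) (j : ℕ) : ℝ) *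
              ∫ t in (0:ℝ)..s, Real.cosh t ^ (j : ℕ) * Real.sinh t ^ (d - 1 - (j : ℕ))) * v j r) :
    ∀ (j : Fin d) (r : ℝ), 0 ≤ r →
      v j r = ω * Real.cosh r ^ (d - 1 - (j : ℕ)) * Real.sinh r ^ (j : ℕ) := by
  intro j0 r hr
  have key : ∀ s : ℝ, 0 ≤ s →
      ∑ j : Fin d, (((d-1).choose (j:ℕ) : ℝ) *
        ∫ t in (0:ℝ)..s, Real.cosh t ^ (j:ℕ) * Real.sinh t ^ (d - 1 - (j:ℕ))) *
          (v j r - ω * Real.cosh r ^ (d - 1 - (j:ℕ)) * Real.sinh r ^ (j:ℕ)) = 0 := by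
    intro s hs
    have hk := key_integral (d-1) r s
    have hd1 : d - 1 + 1 = d := by omega
    rw [hd1, ← Fin.sum_univ_eq_sum_range
      (fun j => (((d-1).choose j : ℝ) *
        ∫ t in (0:ℝ)..s, Real.cosh t ^ j * Real.sinh t ^ (d - 1 - j))
          * (Real.cosh r ^ (d - 1 - j) * Real.sinh r ^ j)) d] at hk
    have h1 := h r s hr hs
    rw [hk, mul_add] at h1
    have expand : ∑ j : Fin d, (((d-1).choose (j:ℕ) : ℝ) *
        ∫ t in (0:ℝ)..s, Real.cosh t ^ (j:ℕ) * Real.sinh t ^ (d - 1 - (j:ℕ))) *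
          (v j r - ω * Real.cosh r ^ (d - 1 - (j:ℕ)) * Real.sinh r ^ (j:ℕ))
        = (∑ j : Fin d, (((d-1).choose (j:ℕ) : ℝ) *
            ∫ t in (0:ℝ)..s, Real.cosh t ^ (j:ℕ) * Real.sinh t ^ (d - 1 - (j:ℕ))) * v j r)
          - ω * ∑ j : Fin d, (((d-1).choose (j:ℕ) : ℝ) *
              ∫ t in (0:ℝ)..s, Real.cosh t ^ (j:ℕ) * Real.sinh t ^ (d - 1 - (j:ℕ)))
                * (Real.cosh r ^ (d - 1 - (j:ℕ)) * Real.sinh r ^ (j:ℕ)) := by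
      rw [Finset.mul_sum, ← Finset.sum_sub_distrib]
      exact Finset.sum_congr rfl fun j _ => by ring
    rw [expand]
    linarith
  have := lin_indep d (by omega) _ key j0
  linarith
end

section
/- For the half-space model metric d_H(x,y) = 2 arsinh(‖x−y‖ / (2√(x_d y_d))) on the upper half-space H^d = ℝ^{d-1} × (0,∞): for all z ∈ ℝ^{d-1} and u > 0, the box C^{d-1}(z, a u) × [7u/8, u] is contained in the metric ball B_{H^d}((z,u), 1/2), where a = √((1/(d-1))·(7 sinh(1/4)²/2 − 1/64)) and C^{d-1}(z,s) = ∏_{i=1}^{d-1} [z_i − s, z_i + s]. -/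
open Real

/-- The distance of the Poincaré half-space model on `ℝ^{d-1} × (0,∞)`:
`d_H(x,y) = 2 arsinh(‖x−y‖ / (2√(x_d y_d)))`. -/
noncomputable def halfSpaceDist {n : ℕ} (x y : EuclideanSpace ℝ (Fin n) × ℝ) : ℝ :=
  2 * Real.arsinh (Real.sqrt (‖x.1 - y.1‖ ^ 2 + (x.2 - y.2) ^ 2) / (2 * Real.sqrt (x.2 * y.2)))

set_option maxHeartbeats 1000000 in
/-- For all `z ∈ ℝ^{d-1}` and `u > 0`, the box `C^{d-1}(z, a u) × [7u/8, u]` is contained in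
the half-space-model ball `B_{H^d}((z,u), 1/2)`, where
`a = √((1/(d-1))·(7 sinh(1/4)²/2 − 1/64))`. -/
theorem box_subset_halfSpace_ball (d : ℕ) (hd : 2 ≤ d)
    (z : EuclideanSpace ℝ (Fin (d - 1))) (u : ℝ) (hu : 0 < u)
    (a : ℝ) (ha : a = Real.sqrt ((1 / ((d : ℝ) - 1)) * (7 * Real.sinh (1/4) ^ 2 / 2 - 1/64)))
    (x : EuclideanSpace ℝ (Fin (d - 1)) × ℝ)
    (hx1 : ∀ i, |x.1 i - z i| ≤ a * u)
    (hx2 : 7 * u / 8 ≤ x.2) (hx3 : x.2 ≤ u) :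
    halfSpaceDist x (z, u) ≤ 1 / 2 := by
  have hd1 : (1:ℝ) ≤ (d:ℝ) - 1 := by
    have : (2:ℝ) ≤ (d:ℝ) := by exact_mod_cast hd
    linarith
  set s := Real.sinh (1/4) with hs_def
  have hs : 0 < s := Real.sinh_pos_iff.mpr (by norm_num)
  have h14 : (1:ℝ)/4 ≤ s := by
    have := Real.self_lt_sinh_iff.mpr (show (0:ℝ) < 1/4 by norm_num)
    linarith
  have hinner : 0 ≤ 7 * s ^ 2 / 2 - 1/64 := by nlinarith
  have ha0 : 0 ≤ a := ha ▸ Real.sqrt_nonneg _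
  have ha2 : a ^ 2 = (1 / ((d:ℝ) - 1)) * (7 * s ^ 2 / 2 - 1/64) := by
    rw [ha, Real.sq_sqrt]
    positivity
  -- norm bound
  have hnorm : ‖x.1 - z‖ ^ 2 ≤ ((d:ℝ) - 1) * (a * u) ^ 2 := by
    rw [EuclideanSpace.norm_eq, Real.sq_sqrt (by positivity)]
    have hcard : ((d - 1 : ℕ) : ℝ) = (d:ℝ) - 1 := by
      rw [Nat.cast_sub (by omega)]; norm_num
    have hle : ∑ i, ‖(x.1 - z) i‖ ^ 2 ≤ ∑ _i : Fin (d-1), (a * u) ^ 2 := by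
      apply Finset.sum_le_sum
      intro i _
      have hi : |x.1 i - z i| ≤ a * u := hx1 i
      have hn : ‖(x.1 - z) i‖ = |x.1 i - z i| := by
        simp [Real.norm_eq_abs]
      rw [hn]
      nlinarith [abs_nonneg (x.1 i - z i)]
    have hc : ∑ _i : Fin (d-1), (a * u) ^ 2 = ((d:ℝ) - 1) * (a * u) ^ 2 := by
      rw [Finset.sum_const, Finset.card_univ, Fintype.card_fin, nsmul_eq_mul, hcard]
    linarith
  have hD : ((d:ℝ) - 1) ≠ 0 := by linarith
  have hDa : ((d:ℝ) - 1) * (a * u) ^ 2 = (7 * s ^ 2 / 2 - 1/64) * u ^ 2 := by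
    rw [mul_pow, ha2]; field_simp
  have hA : ‖x.1 - z‖ ^ 2 + (x.2 - u) ^ 2 ≤ 7 * s ^ 2 / 2 * u ^ 2 := by
    have h2 : (x.2 - u) ^ 2 ≤ (u / 8) ^ 2 := by nlinarith
    nlinarith [hnorm, hDa]
  have hx2pos : 0 < x.2 := lt_of_lt_of_le (by linarith) hx2
  have hsqrt72 : (0:ℝ) < Real.sqrt (7/2) := Real.sqrt_pos.mpr (by norm_num)
  -- denominator
  have hden : Real.sqrt (7/2) * u ≤ 2 * Real.sqrt (x.2 * u) := by
    have h4 : 2 * Real.sqrt (x.2 * u) = Real.sqrt (4 * (x.2 * u)) := by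
      rw [Real.sqrt_mul (by norm_num : (0:ℝ) ≤ 4),
        show Real.sqrt 4 = 2 by
          rw [show (4:ℝ) = 2 ^ 2 by norm_num, Real.sqrt_sq (by norm_num)]]
    have h72 : Real.sqrt (7/2) * u = Real.sqrt (7/2 * u ^ 2) := by
      rw [Real.sqrt_mul (by norm_num : (0:ℝ) ≤ 7/2), Real.sqrt_sq hu.le]
    rw [h4, h72]
    apply Real.sqrt_le_sqrt
    nlinarith
  -- numerator
  have hnum : Real.sqrt (‖x.1 - z‖ ^ 2 + (x.2 - u) ^ 2) ≤ Real.sqrt (7/2) * (s * u) := by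
    have heq : Real.sqrt (7/2) * (s * u) = Real.sqrt (7/2 * (s * u) ^ 2) := by
      rw [Real.sqrt_mul (by norm_num : (0:ℝ) ≤ 7/2),
        Real.sqrt_sq (by positivity)]
    rw [heq]
    apply Real.sqrt_le_sqrt
    have : 7/2 * (s * u) ^ 2 = 7 * s ^ 2 / 2 * u ^ 2 := by ring
    linarith
  have hdenpos : 0 < Real.sqrt (7/2) * u := mul_pos hsqrt72 hu
  have ht : Real.sqrt (‖x.1 - z‖ ^ 2 + (x.2 - u) ^ 2) / (2 * Real.sqrt (x.2 * u)) ≤ s := by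
    have hdpos : 0 < 2 * Real.sqrt (x.2 * u) := by
      have h0 : 0 < Real.sqrt (x.2 * u) := Real.sqrt_pos.mpr (mul_pos hx2pos hu)
      linarith
    rw [div_le_iff₀ hdpos]
    have h1 : Real.sqrt (7/2) * (s * u) = s * (Real.sqrt (7/2) * u) := by ring
    have h2 : s * (Real.sqrt (7/2) * u) ≤ s * (2 * Real.sqrt (x.2 * u)) :=
      mul_le_mul_of_nonneg_left hden hs.le
    linarith [hnum]
  unfold halfSpaceDist
  have := Real.arsinh_le_arsinh.mpr ht
  rw [hs_def] at this
  rw [Real.arsinh_sinh] at this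
  linarith
end

section
/- In the half-space model, the countable family of balls B_{H^d}((7/8)^ℓ (2ak, 1), 1/2), indexed by k ∈ ℤ^{d-1} and ℓ ∈ ℤ, covers all of H^d, where a = √((1/(d-1))·(7 sinh(1/4)²/2 − 1/64)). -/
open Real

lemma aux_key (S N t y2 : ℝ) (hS : 1/4 ≤ S)
    (hNle : N ≤ (7 * S ^ 2 / 2 - 1/64) * t ^ 2)
    (ht : 0 < t) (h1 : t ≤ y2) (h2 : y2 * 7 < t * 8) :
    N + (y2 - t) ^ 2 ≤ 4 * (y2 * t) * S ^ 2 := by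
  nlinarith [mul_nonneg (sub_nonneg.2 h1) (by nlinarith : (0:ℝ) ≤ 11 * t - 8 * y2),
    mul_nonneg (by nlinarith : (0:ℝ) ≤ 4 * y2 * t - 7/2 * t ^ 2)
      (by nlinarith : (0:ℝ) ≤ S ^ 2 - 1/16),
    sq_nonneg t, sq_nonneg (y2 - t)]

/-- The balls `B_{H^d}((7/8)^ℓ (2ak, 1), 1/2)`, `k ∈ ℤ^{d-1}`, `ℓ ∈ ℤ`, cover the
half-space `H^d = ℝ^{d-1} × (0,∞)`, where `a = √((1/(d-1))·(7 sinh(1/4)²/2 − 1/64))`. -/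
theorem halfSpace_ball_cover (d : ℕ) (hd : 2 ≤ d)
    (a : ℝ) (ha : a = Real.sqrt ((1 / ((d : ℝ) - 1)) * (7 * Real.sinh (1/4) ^ 2 / 2 - 1/64)))
    (y : EuclideanSpace ℝ (Fin (d - 1)) × ℝ) (hy : 0 < y.2) :
    ∃ (k : Fin (d - 1) → ℤ) (ℓ : ℤ),
      halfSpaceDist y
        ((WithLp.toLp 2 (fun i => ((7:ℝ)/8) ^ ℓ * (2 * a * (k i))) : EuclideanSpace ℝ (Fin (d - 1))),
          ((7:ℝ)/8) ^ ℓ) ≤ 1 / 2 := by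
  have hD : (1:ℝ) ≤ (d:ℝ) - 1 := by
    have : (2:ℝ) ≤ (d:ℝ) := by exact_mod_cast hd
    linarith
  have hDpos : (0:ℝ) < (d:ℝ) - 1 := by linarith
  have hsinh : (1:ℝ)/4 ≤ Real.sinh (1/4) :=
    le_of_lt (Real.self_lt_sinh_iff.2 (by norm_num))
  have hA : (0:ℝ) < 7 * Real.sinh (1/4) ^ 2 / 2 - 1/64 := by nlinarith
  have ha2 : a ^ 2 = (1 / ((d:ℝ) - 1)) * (7 * Real.sinh (1/4) ^ 2 / 2 - 1/64) := by
    rw [ha]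
    exact Real.sq_sqrt (mul_nonneg (one_div_nonneg.2 hDpos.le) hA.le)
  have hapos : 0 < a := by
    rw [ha]
    exact Real.sqrt_pos.2 (mul_pos (one_div_pos.2 hDpos) hA)
  obtain ⟨n, hn1, hn2⟩ := exists_mem_Ico_zpow hy (by norm_num : (1:ℝ) < 8/7)
  set t : ℝ := ((8:ℝ)/7) ^ n with htdef
  have htpos : 0 < t := zpow_pos (by norm_num) n
  have hn2' : y.2 * 7 < t * 8 := by
    have h := hn2
    rw [zpow_add_one₀ (by norm_num : ((8:ℝ)/7) ≠ 0)] at h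
    nlinarith
  have hn1' : t ≤ y.2 := hn1
  have hℓ : ((7:ℝ)/8) ^ (-n) = t := by
    rw [zpow_neg, htdef, ← inv_zpow]
    norm_num
  refine ⟨fun i => round (y.1 i / (2 * a * t)), -n, ?_⟩
  simp only [halfSpaceDist, hℓ]
  have h2at : 0 < 2 * a * t := by positivity
  have hki : ∀ i, |y.1 i - t * (2 * a * (round (y.1 i / (2 * a * t)) : ℝ))| ≤ a * t := by
    intro i
    have h := abs_sub_round (y.1 i / (2 * a * t))
    have heq : y.1 i - t * (2 * a * (round (y.1 i / (2 * a * t)) : ℝ))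
        = (y.1 i / (2 * a * t) - (round (y.1 i / (2 * a * t)) : ℝ)) * (2 * a * t) := by
      field_simp
    rw [heq, abs_mul, abs_of_pos h2at]
    calc |y.1 i / (2 * a * t) - (round (y.1 i / (2 * a * t)) : ℝ)| * (2 * a * t)
        ≤ (1/2) * (2 * a * t) := mul_le_mul_of_nonneg_right h h2at.le
      _ = a * t := by ring
  set c : EuclideanSpace ℝ (Fin (d-1)) :=
    WithLp.toLp 2 (fun i => t * (2 * a * ((round (y.1 i / (2 * a * t)) : ℤ) : ℝ))) with hc
  have hnormsq : ‖y.1 - c‖ ^ 2 ≤ (7 * Real.sinh (1/4) ^ 2 / 2 - 1/64) * t ^ 2 := by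
    have hne : ‖y.1 - c‖ = Real.sqrt (∑ i, ((y.1 - c) i) ^ 2) := by
      rw [EuclideanSpace.norm_eq]
      congr 1
      refine Finset.sum_congr rfl fun i _ => ?_
      rw [Real.norm_eq_abs, sq_abs]
    rw [hne, Real.sq_sqrt (Finset.sum_nonneg fun i _ => sq_nonneg _)]
    have hcard : ((d - 1 : ℕ) : ℝ) = (d:ℝ) - 1 := by
      have h1d : 1 ≤ d := by omega
      push_cast [Nat.cast_sub h1d]
      ring
    have hDa : ((d:ℝ) - 1) * a ^ 2 = 7 * Real.sinh (1/4) ^ 2 / 2 - 1/64 := by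
      rw [ha2]
      field_simp
    calc ∑ i, ((y.1 - c) i) ^ 2 ≤ ∑ _i : Fin (d-1), (a * t) ^ 2 := by
          refine Finset.sum_le_sum fun i _ => ?_
          have hsub : (y.1 - c) i = y.1 i - t * (2 * a * (round (y.1 i / (2 * a * t)) : ℝ)) := by
            simp [hc]
          rw [hsub, ← sq_abs]
          exact pow_le_pow_left₀ (abs_nonneg _) (hki i) 2
      _ = ((d:ℝ) - 1) * (a * t) ^ 2 := by
          rw [Finset.sum_const, Finset.card_univ, Fintype.card_fin, nsmul_eq_mul, hcard]
      _ = (((d:ℝ) - 1) * a ^ 2) * t ^ 2 := by ring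
      _ = (7 * Real.sinh (1/4) ^ 2 / 2 - 1/64) * t ^ 2 := by rw [hDa]
  have key : ‖y.1 - c‖ ^ 2 + (y.2 - t) ^ 2 ≤ 4 * (y.2 * t) * Real.sinh (1/4) ^ 2 :=
    aux_key _ _ _ _ hsinh hnormsq htpos hn1' hn2'
  have hyt : 0 < y.2 * t := mul_pos hy htpos
  have hsq : Real.sqrt (‖y.1 - c‖ ^ 2 + (y.2 - t) ^ 2)
      ≤ 2 * Real.sqrt (y.2 * t) * Real.sinh (1/4) := by
    have hspos : (0:ℝ) < Real.sinh (1/4) := by linarith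
    have h1 : (2 * Real.sqrt (y.2 * t) * Real.sinh (1/4)) ^ 2
        = 4 * (y.2 * t) * Real.sinh (1/4) ^ 2 := by
      rw [mul_pow, mul_pow, Real.sq_sqrt hyt.le]
      ring
    calc Real.sqrt (‖y.1 - c‖ ^ 2 + (y.2 - t) ^ 2)
        ≤ Real.sqrt ((2 * Real.sqrt (y.2 * t) * Real.sinh (1/4)) ^ 2) := by
          apply Real.sqrt_le_sqrt
          rw [h1]
          exact key
      _ = 2 * Real.sqrt (y.2 * t) * Real.sinh (1/4) := Real.sqrt_sq (by positivity)
  have hdiv : Real.sqrt (‖y.1 - c‖ ^ 2 + (y.2 - t) ^ 2) / (2 * Real.sqrt (y.2 * t))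
      ≤ Real.sinh (1/4) := by
    rw [div_le_iff₀ (by positivity)]
    linarith
  have harsinh := Real.arsinh_le_arsinh.2 hdiv
  rw [Real.arsinh_sinh] at harsinh
  linarith
end

section
/- In the half-space model there is a uniform multiplicity bound: there exists N_0 ∈ ℕ such that for every y ∈ H^d, the number of pairs (k, ℓ) ∈ ℤ^{d-1} × ℤ with y ∈ B_{H^d}((7/8)^ℓ (2ak, 1), 1/2) is at most N_0, where a = √((1/(d-1))·(7 sinh(1/4)²/2 − 1/64)). -/
open Real

private lemma halfSpace_aux_updown (s y2 c2 : ℝ) (hy : 0 < y2) (hc : 0 < c2)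
    (hs : 4*s^2 ≤ 1/2) (hv : (y2-c2)^2 ≤ 4*s^2*(y2*c2)) :
    y2 ≤ (5/2)*c2 ∧ c2 ≤ (5/2)*y2 := by
  have h : (y2-c2)^2 ≤ (1/2)*(y2*c2) := by nlinarith [mul_pos hy hc]
  constructor
  · nlinarith [sq_nonneg c2]
  · nlinarith [sq_nonneg y2]

private lemma halfSpace_aux_h7 (s y2 c2 : ℝ) (hc : 0 ≤ c2) (h : y2 ≤ (5/2)*c2) :
    4*s^2*(y2*c2) ≤ 10*s^2*c2^2 := by
  nlinarith [mul_nonneg (mul_nonneg (sq_nonneg s) hc) (by linarith : (0:ℝ) ≤ 5*c2 - 2*y2)]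

private lemma halfSpace_aux_w (w s aa D : ℝ) (hw : w^2*(4*aa) ≤ 10*s^2)
    (h2 : 13/64 ≤ aa*D) (hD : 1 ≤ D) (hs2 : s^2 ≤ 49/576) :
    w^2 ≤ (2*(D+1))^2 := by
  have step1 : w^2*(13/64) ≤ w^2*(aa*D) := mul_le_mul_of_nonneg_left h2 (sq_nonneg w)
  have step2 : w^2*(4*aa)*D ≤ 10*s^2*D := mul_le_mul_of_nonneg_right hw (by linarith)
  have step3 : s^2*D ≤ (49/576)*D := mul_le_mul_of_nonneg_right hs2 (by linarith)
  nlinarith [sq_nonneg D, sq_nonneg w]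

set_option maxHeartbeats 2000000 in
/-- Uniform multiplicity bound: there is `N₀ ∈ ℕ` such that every point `y ∈ H^d` lies in at
most `N₀` of the balls `B_{H^d}((7/8)^ℓ (2ak, 1), 1/2)`, `k ∈ ℤ^{d-1}`, `ℓ ∈ ℤ`, where
`a = √((1/(d-1))·(7 sinh(1/4)²/2 − 1/64))`. -/
theorem halfSpace_ball_bounded_multiplicity (d : ℕ) (hd : 2 ≤ d)
    (a : ℝ) (ha : a = Real.sqrt ((1 / ((d : ℝ) - 1)) * (7 * Real.sinh (1/4) ^ 2 / 2 - 1/64))) :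
    ∃ N₀ : ℕ, ∀ y : EuclideanSpace ℝ (Fin (d - 1)) × ℝ, 0 < y.2 →
      (Set.Finite {p : (Fin (d - 1) → ℤ) × ℤ |
          halfSpaceDist y
            ((WithLp.toLp 2 (fun i => ((7:ℝ)/8) ^ p.2 * (2 * a * (p.1 i))) : EuclideanSpace ℝ (Fin (d - 1))),
              ((7:ℝ)/8) ^ p.2) ≤ 1 / 2}) ∧
      {p : (Fin (d - 1) → ℤ) × ℤ |
          halfSpaceDist y
            ((WithLp.toLp 2 (fun i => ((7:ℝ)/8) ^ p.2 * (2 * a * (p.1 i))) : EuclideanSpace ℝ (Fin (d - 1))),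
              ((7:ℝ)/8) ^ p.2) ≤ 1 / 2}.ncard ≤ N₀ := by
  classical
  have hd1 : (1:ℝ) ≤ (d:ℝ) - 1 := by
    have h2 : (2:ℝ) ≤ (d:ℝ) := by exact_mod_cast hd
    linarith
  have hD : (0:ℝ) < (d:ℝ) - 1 := by linarith
  -- bounds on sinh (1/4)
  have hs_lb : (1/4:ℝ) < Real.sinh (1/4) := Real.self_lt_sinh_iff.mpr (by norm_num)
  have hmulexp : Real.exp (1/4:ℝ) * Real.exp (-(1/4:ℝ)) = 1 := by
    rw [← Real.exp_add]; norm_num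
  have he1 : (3/4:ℝ) ≤ Real.exp (-(1/4:ℝ)) := by
    nlinarith [Real.add_one_le_exp (-(1/4):ℝ)]
  have he2 : Real.exp (1/4:ℝ) ≤ 4/3 := by
    nlinarith [Real.exp_pos (1/4:ℝ)]
  have hs_ub : Real.sinh (1/4:ℝ) ≤ 7/24 := by
    rw [Real.sinh_eq]; norm_num at he1 he2 ⊢; linarith
  -- properties of a
  have hargpos : (0:ℝ) < (1 / ((d:ℝ)-1)) * (7 * Real.sinh (1/4) ^ 2 / 2 - 1/64) := by
    have h1 : (13/64:ℝ) ≤ 7 * Real.sinh (1/4)^2/2 - 1/64 := by nlinarith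
    exact mul_pos (by positivity) (by linarith)
  have ha_pos : 0 < a := by rw [ha]; exact Real.sqrt_pos.mpr hargpos
  have ha_sq : a^2 = (1 / ((d:ℝ)-1)) * (7 * Real.sinh (1/4) ^ 2 / 2 - 1/64) := by
    rw [ha, Real.sq_sqrt hargpos.le]
  have ha2' : (13/64:ℝ) ≤ a^2 * ((d:ℝ)-1) := by
    have h1 : (13/64:ℝ) ≤ 7 * Real.sinh (1/4)^2/2 - 1/64 := by nlinarith
    have h2 : a^2 * ((d:ℝ)-1) = 7 * Real.sinh (1/4)^2/2 - 1/64 := by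
      rw [ha_sq]; field_simp
    linarith
  have h4s : 4 * Real.sinh (1/4)^2 ≤ 1/2 := by nlinarith
  have hs2 : Real.sinh (1/4)^2 ≤ 49/576 := by nlinarith
  -- log constants
  have hμpos : (0:ℝ) < Real.log (8/7) := Real.log_pos (by norm_num)
  have hlog78 : Real.log (7/8:ℝ) = - Real.log (8/7) := by
    rw [show (7/8:ℝ) = (8/7:ℝ)⁻¹ by norm_num, Real.log_inv]
  have hlogneg : Real.log (7/8:ℝ) < 0 := by rw [hlog78]; linarith
  have hlog57 : Real.log (5/2:ℝ) ≤ 7 * Real.log (8/7:ℝ) := by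
    have h : ((5:ℝ)/2) ≤ (8/7:ℝ)^(7:ℕ) := by norm_num
    calc Real.log (5/2:ℝ) ≤ Real.log ((8/7:ℝ)^(7:ℕ)) := Real.log_le_log (by norm_num) h
    _ = 7 * Real.log (8/7) := by rw [Real.log_pow]; norm_num
  -- the target finite index set
  set B : ℤ := 2*(d:ℤ)+1 with hB
  set T : Finset ((Fin (d-1) → ℤ) × ℤ) :=
    (Fintype.piFinset (fun _ : Fin (d-1) => Finset.Icc (-B) B)) ×ˢ (Finset.Icc (-8:ℤ) 8) with hT
  refine ⟨T.card, ?_⟩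
  intro y hy
  set u : ℝ := Real.log y.2 / Real.log (7/8) with hu
  set L : ℤ := ⌊u⌋ with hL
  set f : (Fin (d-1) → ℤ) × ℤ → (Fin (d-1) → ℤ) × ℤ :=
    fun p => (fun i => p.1 i - ⌊y.1 i / (2*a*((7:ℝ)/8)^p.2)⌋, p.2 - L) with hf
  have hfinj : Function.Injective f := by
    intro p q hpq
    rw [hf] at hpq
    have h2 : p.2 = q.2 := by
      have := congrArg Prod.snd hpq
      simpa using this
    have h1 : p.1 = q.1 := by
      funext i
      have h3 := congrFun (congrArg Prod.fst hpq) i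
      simp only at h3
      rw [h2] at h3
      exact sub_left_inj.mp h3
    exact Prod.ext h1 h2
  have hmem : ∀ p : (Fin (d-1) → ℤ) × ℤ,
      halfSpaceDist y
        ((WithLp.toLp 2 (fun i => ((7:ℝ)/8) ^ p.2 * (2 * a * (p.1 i))) : EuclideanSpace ℝ (Fin (d - 1))),
          ((7:ℝ)/8) ^ p.2) ≤ 1 / 2 → f p ∈ T := by
    intro p hp
    set c2 : ℝ := ((7:ℝ)/8)^p.2 with hc2
    set c1 : EuclideanSpace ℝ (Fin (d-1)) := (WithLp.toLp 2 (fun i => c2 * (2 * a * (p.1 i)))) with hc1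
    have hc2pos : 0 < c2 := zpow_pos (by norm_num) _
    simp only [halfSpaceDist] at hp
    set X : ℝ := ‖y.1 - c1‖ ^ 2 + (y.2 - c2) ^ 2 with hX
    have hX0 : 0 ≤ X := by positivity
    have hM0 : 0 < y.2 * c2 := mul_pos hy hc2pos
    have hden : 0 < Real.sqrt (y.2 * c2) := Real.sqrt_pos.mpr hM0
    -- from the distance condition: √X ≤ 2 sinh(1/4) √(y₂c₂)
    have hq : Real.sqrt X / (2 * Real.sqrt (y.2 * c2)) ≤ Real.sinh (1/4) := by
      have h1 : Real.arsinh (Real.sqrt X / (2 * Real.sqrt (y.2 * c2))) ≤ 1/4 := by linarith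
      calc Real.sqrt X / (2 * Real.sqrt (y.2 * c2))
          = Real.sinh (Real.arsinh (Real.sqrt X / (2 * Real.sqrt (y.2 * c2)))) :=
            (Real.sinh_arsinh _).symm
      _ ≤ Real.sinh (1/4) := Real.sinh_le_sinh.mpr h1
    have hXle : Real.sqrt X ≤ 2 * Real.sinh (1/4) * Real.sqrt (y.2 * c2) := by
      rw [div_le_iff₀ (by positivity)] at hq
      linarith
    have hXsq : X ≤ 4 * Real.sinh (1/4)^2 * (y.2 * c2) := by
      calc X = (Real.sqrt X)^2 := (Real.sq_sqrt hX0).symm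
      _ ≤ (2 * Real.sinh (1/4) * Real.sqrt (y.2 * c2))^2 :=
          pow_le_pow_left₀ (Real.sqrt_nonneg X) hXle 2
      _ = 4 * Real.sinh (1/4)^2 * (y.2 * c2) := by
          rw [mul_pow, mul_pow, Real.sq_sqrt hM0.le]; ring
    -- vertical control
    have hnorm0 : (0:ℝ) ≤ ‖y.1 - c1‖^2 := by positivity
    have hv : (y.2 - c2)^2 ≤ 4 * Real.sinh (1/4)^2 * (y.2 * c2) := by
      rw [hX] at hXsq; linarith
    obtain ⟨hup, hdown⟩ := halfSpace_aux_updown (Real.sinh (1/4)) y.2 c2 hy hc2pos h4s hv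
    -- horizontal control, per coordinate
    have hnormsq : ∀ i, (y.1 i - c1 i)^2 ≤ ‖y.1 - c1‖^2 := by
      intro i
      rw [EuclideanSpace.norm_eq, Real.sq_sqrt (by positivity)]
      have he : (y.1 i - c1 i)^2 = ‖(y.1 - c1) i‖^2 := by
        simp [Real.norm_eq_abs, sq_abs]
      rw [he]
      exact Finset.single_le_sum (f := fun j => ‖(y.1 - c1) j‖^2) (fun j _ => by positivity)
        (Finset.mem_univ i)
    have hcoord : ∀ i, (p.1 i - ⌊y.1 i / (2*a*c2)⌋) ∈ Finset.Icc (-B) B := by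
      intro i
      have hc1i : c1 i = c2 * (2 * a * (p.1 i)) := rfl
      have hki : (y.1 i - c2 * (2 * a * (p.1 i)))^2 ≤ 10 * Real.sinh (1/4)^2 * c2^2 := by
        have h5 := hnormsq i
        rw [hc1i] at h5
        have h6 : ‖y.1 - c1‖^2 ≤ 4 * Real.sinh (1/4)^2 * (y.2 * c2) := by
          rw [hX] at hXsq; linarith [sq_nonneg (y.2 - c2)]
        have h7 : 4 * Real.sinh (1/4)^2 * (y.2 * c2) ≤ 10 * Real.sinh (1/4)^2 * c2^2 :=
          halfSpace_aux_h7 (Real.sinh (1/4)) y.2 c2 hc2pos.le hup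
        linarith
      set z : ℝ := y.1 i / (2*a*c2) with hz
      have h2ac2 : (0:ℝ) < 2*a*c2 := by positivity
      have hw : (z - (p.1 i : ℝ))^2 * (4*a^2) ≤ 10 * Real.sinh (1/4)^2 := by
        have hexpand : (z - (p.1 i : ℝ)) * (2*a*c2) = y.1 i - c2 * (2 * a * (p.1 i)) := by
          rw [hz]; field_simp
        have h5 : ((z - (p.1 i : ℝ)) * (2*a*c2))^2 ≤ 10 * Real.sinh (1/4)^2 * c2^2 := by
          rw [hexpand]; exact hki
        have h6 : (z - (p.1 i : ℝ))^2 * (4*a^2) * c2^2 ≤ (10 * Real.sinh (1/4)^2) * c2^2 := by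
          calc (z - (p.1 i : ℝ))^2 * (4*a^2) * c2^2
              = ((z - (p.1 i : ℝ)) * (2*a*c2))^2 := by ring
          _ ≤ _ := h5
        exact le_of_mul_le_mul_right h6 (by positivity)
      have hwd : (z - (p.1 i : ℝ))^2 ≤ (2*(d:ℝ))^2 := by
        have h8 := halfSpace_aux_w (z - (p.1 i : ℝ)) (Real.sinh (1/4)) (a^2) ((d:ℝ)-1)
          hw ha2' hd1 hs2
        have heq : (2*(((d:ℝ)-1)+1))^2 = (2*(d:ℝ))^2 := by ring
        linarith [heq ▸ h8]
      have habs : |z - (p.1 i : ℝ)| ≤ 2*(d:ℝ) := by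
        have h1 : |z - (p.1 i : ℝ)| = Real.sqrt ((z - (p.1 i : ℝ))^2) :=
          (Real.sqrt_sq_eq_abs _).symm
        rw [h1]
        calc Real.sqrt ((z - (p.1 i : ℝ))^2) ≤ Real.sqrt ((2*(d:ℝ))^2) :=
              Real.sqrt_le_sqrt hwd
        _ = 2*(d:ℝ) := Real.sqrt_sq (by positivity)
      have hfl1 : (⌊z⌋:ℝ) ≤ z := Int.floor_le z
      have hfl2 : z < ⌊z⌋ + 1 := Int.lt_floor_add_one z
      rw [Finset.mem_Icc]
      rw [abs_le] at habs
      constructor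
      · have : ((-B:ℤ):ℝ) ≤ ((p.1 i - ⌊z⌋ : ℤ):ℝ) := by
          rw [hB]; push_cast; linarith [habs.1, habs.2]
        exact_mod_cast this
      · have : ((p.1 i - ⌊z⌋ : ℤ):ℝ) ≤ ((B:ℤ):ℝ) := by
          rw [hB]; push_cast; linarith [habs.1, habs.2]
        exact_mod_cast this
    -- vertical (ℓ) membership
    have hlvert : p.2 - L ∈ Finset.Icc (-8:ℤ) 8 := by
      have hc2log : Real.log c2 = (p.2:ℝ) * Real.log (7/8) := Real.log_zpow _ _
      have hlow' : (2/5) * y.2 ≤ c2 := by linarith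
      have hlog1 : Real.log ((2/5) * y.2) ≤ Real.log c2 :=
        Real.log_le_log (by positivity) hlow'
      have hlog2 : Real.log c2 ≤ Real.log ((5/2) * y.2) :=
        Real.log_le_log hc2pos hdown
      have e1 : Real.log ((2/5) * y.2) = Real.log (2/5) + Real.log y.2 :=
        Real.log_mul (by norm_num) (ne_of_gt hy)
      have e2 : Real.log ((5/2) * y.2) = Real.log (5/2) + Real.log y.2 :=
        Real.log_mul (by norm_num) (ne_of_gt hy)
      have e3 : Real.log (2/5:ℝ) = - Real.log (5/2) := by
        rw [show (2/5:ℝ) = (5/2:ℝ)⁻¹ by norm_num, Real.log_inv]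
      have hulog : u * Real.log (7/8) = Real.log y.2 :=
        div_mul_cancel₀ _ (ne_of_lt hlogneg)
      -- p.2 ≤ u + 7
      have hub : (p.2:ℝ) ≤ u + 7 := by
        have h1 : - Real.log (5/2) + Real.log y.2 ≤ (p.2:ℝ) * Real.log (7/8) := by
          rw [← hc2log]; rw [e1, e3] at hlog1; linarith
        have h2 : ((p.2:ℝ) - u) * Real.log (8/7) ≤ 7 * Real.log (8/7) := by
          have e4 : ((p.2:ℝ) - u) * Real.log (8/7)
              = -((p.2:ℝ) * Real.log (7/8)) + u * Real.log (7/8) := by rw [hlog78]; ring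
          rw [e4, hulog]
          linarith [h1, hlog57]
        have := le_of_mul_le_mul_right h2 hμpos
        linarith
      -- u - 7 ≤ p.2
      have hlb : u - 7 ≤ (p.2:ℝ) := by
        have h1 : (p.2:ℝ) * Real.log (7/8) ≤ Real.log (5/2) + Real.log y.2 := by
          rw [← hc2log]; rw [e2] at hlog2; linarith
        have h2 : (u - (p.2:ℝ)) * Real.log (8/7) ≤ 7 * Real.log (8/7) := by
          have e4 : (u - (p.2:ℝ)) * Real.log (8/7)
              = -(u * Real.log (7/8)) + (p.2:ℝ) * Real.log (7/8) := by rw [hlog78]; ring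
          rw [e4, hulog]
          linarith [h1, hlog57]
        have := le_of_mul_le_mul_right h2 hμpos
        linarith
      have hu1 : (L:ℝ) ≤ u := Int.floor_le u
      have hu2 : u < (L:ℝ) + 1 := Int.lt_floor_add_one u
      rw [Finset.mem_Icc]
      constructor
      · have : ((-8:ℤ):ℝ) ≤ ((p.2 - L : ℤ):ℝ) := by push_cast; linarith
        exact_mod_cast this
      · have : ((p.2 - L : ℤ):ℝ) ≤ ((8:ℤ):ℝ) := by push_cast; linarith
        exact_mod_cast this
    rw [hf]
    simp only [hT, Finset.mem_product, Fintype.mem_piFinset]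
    exact ⟨fun i => hcoord i, hlvert⟩
  -- assemble
  have hsub : {p : (Fin (d - 1) → ℤ) × ℤ |
      halfSpaceDist y
        ((WithLp.toLp 2 (fun i => ((7:ℝ)/8) ^ p.2 * (2 * a * (p.1 i))) : EuclideanSpace ℝ (Fin (d - 1))),
          ((7:ℝ)/8) ^ p.2) ≤ 1 / 2} ⊆ f ⁻¹' (↑T : Set _) := by
    intro p hp
    exact hmem p hp
  have hfin : Set.Finite {p : (Fin (d - 1) → ℤ) × ℤ |
      halfSpaceDist y
        ((WithLp.toLp 2 (fun i => ((7:ℝ)/8) ^ p.2 * (2 * a * (p.1 i))) : EuclideanSpace ℝ (Fin (d - 1))),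
          ((7:ℝ)/8) ^ p.2) ≤ 1 / 2} :=
    Set.Finite.subset (Set.Finite.preimage hfinj.injOn T.finite_toSet) hsub
  refine ⟨hfin, ?_⟩
  have himg : f '' {p : (Fin (d - 1) → ℤ) × ℤ |
      halfSpaceDist y
        ((WithLp.toLp 2 (fun i => ((7:ℝ)/8) ^ p.2 * (2 * a * (p.1 i))) : EuclideanSpace ℝ (Fin (d - 1))),
          ((7:ℝ)/8) ^ p.2) ≤ 1 / 2} ⊆ (↑T : Set _) := by
    rintro q ⟨p, hp, rfl⟩
    exact hmem p hp
  calc {p : (Fin (d - 1) → ℤ) × ℤ |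
      halfSpaceDist y
        ((WithLp.toLp 2 (fun i => ((7:ℝ)/8) ^ p.2 * (2 * a * (p.1 i))) : EuclideanSpace ℝ (Fin (d - 1))),
          ((7:ℝ)/8) ^ p.2) ≤ 1 / 2}.ncard
      = (f '' {p : (Fin (d - 1) → ℤ) × ℤ |
      halfSpaceDist y
        ((WithLp.toLp 2 (fun i => ((7:ℝ)/8) ^ p.2 * (2 * a * (p.1 i))) : EuclideanSpace ℝ (Fin (d - 1))),
          ((7:ℝ)/8) ^ p.2) ≤ 1 / 2}).ncard := (Set.ncard_image_of_injective _ hfinj).symm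
  _ ≤ (↑T : Set _).ncard := Set.ncard_le_ncard himg T.finite_toSet
  _ = T.card := Set.ncard_coe_finset T
end
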